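/- For every d ≥ 1 and every 0 ≤ k ≤ d, g_0([W_{d,k}, 2d]) = k·[W_{d−1,k−1}, 2(d−1)] + z·(d−k)·[W_{d−1,k}, 2(d−1)] in Markov(⊔S_{d−1}B), with the convention that a term whose integer coefficient vanishes is omitted. -/

import Mathlib

open scoped TensorProduct DirectSum

set_option synthInstance.maxHeartbeats 1000000
set_option maxHeartbeats 2000000

namespace SingularHOMFLYPT

/-- Generators of the singular braid monoid on `n` strands: `pos i` is `σ_{i+1}`,
`neg i` is `σ_{i+1}⁻¹` and `tau i` is `τ_{i+1}`, for `i : Fin (n-1)`. -/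
inductive SBGen (n : ℕ) : Type
  | pos : Fin (n - 1) → SBGen n
  | neg : Fin (n - 1) → SBGen n
  | tau : Fin (n - 1) → SBGen n

open FreeMonoid in
/-- The defining relations of the singular braid monoid `SB_n` (Baez, Birman). -/
inductive SBRel (n : ℕ) : FreeMonoid (SBGen n) → FreeMonoid (SBGen n) → Prop
  | inv_right (i : Fin (n - 1)) : SBRel n (of (.pos i) * of (.neg i)) 1
  | inv_left (i : Fin (n - 1)) : SBRel n (of (.neg i) * of (.pos i)) 1
  | sigma_tau (i : Fin (n - 1)) :
      SBRel n (of (.pos i) * of (.tau i)) (of (.tau i) * of (.pos i))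
  | braid (i j : Fin (n - 1)) (h : (i : ℕ) + 1 = j ∨ (j : ℕ) + 1 = i) :
      SBRel n (of (.pos i) * of (.pos j) * of (.pos i))
        (of (.pos j) * of (.pos i) * of (.pos j))
  | braid_tau (i j : Fin (n - 1)) (h : (i : ℕ) + 1 = j ∨ (j : ℕ) + 1 = i) :
      SBRel n (of (.pos i) * of (.pos j) * of (.tau i))
        (of (.tau j) * of (.pos i) * of (.pos j))
  | comm_ss (i j : Fin (n - 1)) (h : (i : ℕ) + 2 ≤ j ∨ (j : ℕ) + 2 ≤ i) :
      SBRel n (of (.pos i) * of (.pos j)) (of (.pos j) * of (.pos i))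
  | comm_st (i j : Fin (n - 1)) (h : (i : ℕ) + 2 ≤ j ∨ (j : ℕ) + 2 ≤ i) :
      SBRel n (of (.pos i) * of (.tau j)) (of (.tau j) * of (.pos i))
  | comm_tt (i j : Fin (n - 1)) (h : (i : ℕ) + 2 ≤ j ∨ (j : ℕ) + 2 ≤ i) :
      SBRel n (of (.tau i) * of (.tau j)) (of (.tau j) * of (.tau i))

/-- The congruence on the free monoid generated by the singular braid relations. -/
def SBcon (n : ℕ) : Con (FreeMonoid (SBGen n)) := conGen (SBRel n)

/-- The singular braid monoid on `n` strands, as a presented monoid. -/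
abbrev SB (n : ℕ) : Type := (SBcon n).Quotient

/-- The canonical projection from the free monoid onto `SB n`. -/
def SB.mk {n : ℕ} : FreeMonoid (SBGen n) →* SB n := Con.mk' (SBcon n)

/-- The generator `σ_{i+1}` of `SB n`. -/
def sG {n : ℕ} (i : Fin (n - 1)) : SB n := SB.mk (.of (.pos i))

/-- The generator `σ_{i+1}⁻¹` of `SB n`. -/
def sInvG {n : ℕ} (i : Fin (n - 1)) : SB n := SB.mk (.of (.neg i))

/-- The generator `τ_{i+1}` of `SB n`. -/
def tauG {n : ℕ} (i : Fin (n - 1)) : SB n := SB.mk (.of (.tau i))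

theorem SB.sound {n : ℕ} {a b : FreeMonoid (SBGen n)} (h : SBRel n a b) :
    SB.mk a = SB.mk b :=
  Con.eq _ |>.2 (ConGen.Rel.of a b h)

/-- Lift a map on generators to a monoid homomorphism on `SB n`. -/
def SB.lift {n : ℕ} {M : Type*} [Monoid M] (f : SBGen n → M)
    (h : ∀ a b, SBRel n a b → FreeMonoid.lift f a = FreeMonoid.lift f b) :
    SB n →* M :=
  Con.lift _ (FreeMonoid.lift f)
    (Con.conGen_le.2 fun a b hab => (Con.ker_rel _).2 (h a b hab))

@[simp] theorem SB.lift_mk {n : ℕ} {M : Type*} [Monoid M] (f : SBGen n → M)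
    (h : ∀ a b, SBRel n a b → FreeMonoid.lift f a = FreeMonoid.lift f b)
    (w : FreeMonoid (SBGen n)) :
    SB.lift f h (SB.mk w) = FreeMonoid.lift f w :=
  Con.lift_coe _ w

/-- The number of singular points (`τ`-letters) of a generator. -/
def degGen {n : ℕ} : SBGen n → Multiplicative ℕ
  | .tau _ => Multiplicative.ofAdd 1
  | _ => 1

/-- The monoid homomorphism `deg : SB n →* (ℕ, +)` counting singular points. -/
def degM {n : ℕ} : SB n →* Multiplicative ℕ :=
  SB.lift degGen (by
    rintro a b h
    cases h <;> simp [degGen, mul_comm])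
/-- Shifting generators by `k`, viewing `SB n` inside `SB N` (strands `k+1, …, k+n`). -/
def shiftGen {n : ℕ} (N k : ℕ) (h : k + n ≤ N) : SBGen n → SBGen N
  | .pos i => .pos ⟨k + i, by have := i.2; omega⟩
  | .neg i => .neg ⟨k + i, by have := i.2; omega⟩
  | .tau i => .tau ⟨k + i, by have := i.2; omega⟩

theorem shiftGen_rel {n : ℕ} (N k : ℕ) (h : k + n ≤ N) {a b : FreeMonoid (SBGen n)}
    (hab : SBRel n a b) :
    SBRel N (FreeMonoid.map (shiftGen N k h) a) (FreeMonoid.map (shiftGen N k h) b) := by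
  cases hab <;>
    simp only [map_mul, map_one, FreeMonoid.map_of, shiftGen] <;>
    first
      | exact SBRel.inv_right _
      | exact SBRel.inv_left _
      | exact SBRel.sigma_tau _
      | (rename_i i j hij; exact SBRel.braid _ _ (by simp; omega))
      | (rename_i i j hij; first
          | exact SBRel.braid_tau _ _ (by simp; omega)
          | exact SBRel.comm_ss _ _ (by simp; omega)
          | exact SBRel.comm_st _ _ (by simp; omega)
          | exact SBRel.comm_tt _ _ (by simp; omega))

/-- The monoid homomorphism `SB n →* SB N` placing a braid on the strands `k+1, …, k+n`. -/
def shiftHom {n : ℕ} (N k : ℕ) (h : k + n ≤ N) : SB n →* SB N :=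
  Con.lift _ (SB.mk.comp (FreeMonoid.map (shiftGen N k h)))
    (Con.conGen_le.2 fun a b hab => (Con.ker_rel _).2 (SB.sound (shiftGen_rel N k h hab)))

/-- The natural inclusion `SB n →* SB N` (adding trivial strands on the right). -/
def inclSB {n : ℕ} (N : ℕ) (h : n ≤ N) : SB n →* SB N := shiftHom N 0 (by omega)

/-- `α ∗ β`: the braid obtained by placing `β` (on `m` strands) above (to the right of)
`α` (on `n` strands), realized in `SB N` for `n + m ≤ N`. -/
def starIn {n m : ℕ} (N : ℕ) (h : n + m ≤ N) (α : SB n) (β : SB m) : SB N :=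
  inclSB N (by omega) α * shiftHom N n h β
@[simp] theorem shiftHom_mk {n : ℕ} (N k : ℕ) (h : k + n ≤ N) (w : FreeMonoid (SBGen n)) :
    shiftHom N k h (SB.mk w) = SB.mk (FreeMonoid.map (shiftGen N k h) w) :=
  Con.lift_coe _ w

theorem shiftHom_sG {n : ℕ} (N k : ℕ) (h : k + n ≤ N) (i : Fin (n - 1)) :
    shiftHom N k h (sG i) = sG ⟨k + i.1, by have := i.2; omega⟩ := rfl

theorem inclSB_sG {n : ℕ} (N : ℕ) (h : n ≤ N) (i : Fin (n - 1)) :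
    inclSB N h (sG i) = sG ⟨0 + i.1, by have := i.2; omega⟩ := rfl

noncomputable section

/-- The field `ℂ(q)` of rational functions over `ℂ` in the variable `q`. -/
abbrev Kq : Type := RatFunc ℂ

/-- The field `ℂ(q,z) = ℂ(q)(z)` of rational functions over `ℂ` in the variables `q, z`. -/
abbrev Lqz : Type := RatFunc Kq

/-- The variable `q`, as an element of `ℂ(q)`. -/
def qK : Kq := RatFunc.X

/-- The variable `z`, as an element of `ℂ(q,z)`. -/
def zL : Lqz := RatFunc.X

/-- The variable `q`, as an element of `ℂ(q,z)`. -/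
def qL : Lqz := algebraMap Kq Lqz qK

/-- The Hecke relations `σ_k² = (q-1)σ_k + q` in the monoid algebra `ℂ(q)[SB_n]`. -/
def HeckeRel (n : ℕ) : MonoidAlgebra Kq (SB n) → MonoidAlgebra Kq (SB n) → Prop :=
  fun x y => ∃ i : Fin (n - 1),
    x = MonoidAlgebra.of Kq (SB n) (sG i) ^ 2 ∧
    y = (qK - 1) • MonoidAlgebra.of Kq (SB n) (sG i) + qK • 1

/-- The singular Hecke algebra `H(SB_n)`: the quotient of `ℂ(q)[SB_n]` by the two-sided
ideal generated by the elements `σ_k² - (q-1)σ_k - q`. -/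
abbrev Hecke (n : ℕ) : Type := RingQuot (HeckeRel n)

/-- The image of a singular braid in the singular Hecke algebra. -/
def heckeOf {n : ℕ} (β : SB n) : Hecke n :=
  RingQuot.mkAlgHom Kq (HeckeRel n) (MonoidAlgebra.of Kq (SB n) β)

/-- `H_z(SB_n) := ℂ(q,z) ⊗_{ℂ(q)} H(SB_n)`. -/
abbrev HeckeZ (n : ℕ) : Type := Lqz ⊗[Kq] Hecke n

/-- The image of a singular braid in `H_z(SB_n)`. -/
def ofHZ {n : ℕ} (β : SB n) : HeckeZ n := (1 : Lqz) ⊗ₜ[Kq] heckeOf β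

/-- The algebra homomorphism `H(SB_n) → H(SB_{n+1})` induced by the natural inclusion
`SB_n ↪ SB_{n+1}`. -/
def heckeIncl (n : ℕ) : Hecke n →ₐ[Kq] Hecke (n + 1) :=
  RingQuot.liftAlgHom Kq
    ⟨((RingQuot.mkAlgHom Kq (HeckeRel (n + 1))).comp
        (MonoidAlgebra.mapDomainAlgHom Kq Kq (inclSB (n + 1) (Nat.le_succ n)))),
      by
        rintro x y ⟨i, rfl, rfl⟩
        have hi := i.2
        set i' : Fin ((n + 1) - 1) := ⟨0 + i.1, by omega⟩ with hi'
        have hgen : (MonoidAlgebra.mapDomainAlgHom Kq Kq (inclSB (n + 1) (Nat.le_succ n)))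
            (MonoidAlgebra.of Kq (SB n) (sG i)) = MonoidAlgebra.of Kq (SB (n + 1)) (sG i') := by
          rw [MonoidAlgebra.of_apply, MonoidAlgebra.mapDomainAlgHom_apply,
            MonoidAlgebra.mapDomain_single, inclSB_sG, MonoidAlgebra.of_apply]
        have hrel : HeckeRel (n + 1) (MonoidAlgebra.of Kq (SB (n + 1)) (sG i') ^ 2)
            ((qK - 1) • MonoidAlgebra.of Kq (SB (n + 1)) (sG i') + qK • 1) := ⟨i', rfl, rfl⟩
        have hmk := RingQuot.mkAlgHom_rel Kq hrel
        simp only [map_pow, map_add, map_smul, map_one] at hmk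
        simp only [AlgHom.coe_comp, Function.comp_apply, map_pow, map_add, map_smul, map_one,
          hgen]
        exact hmk⟩

/-- The algebra homomorphism `ι_n : H_z(SB_n) → H_z(SB_{n+1})`. -/
def iotaHZ (n : ℕ) : HeckeZ n →ₐ[Lqz] HeckeZ (n + 1) :=
  Algebra.TensorProduct.map (AlgHom.id Lqz Lqz) (heckeIncl n)
/-- The `ℂ(q)`-subspace `H(S_dB_n)` of the singular Hecke algebra spanned by the images of
the singular braids with `d` singular points. -/
def HSd (n d : ℕ) : Submodule Kq (Hecke n) :=
  Submodule.span Kq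
    {x | ∃ β : SB n, degM β = Multiplicative.ofAdd d ∧ x = heckeOf β}

/-- The `ℂ(q,z)`-subspace `H_z(S_dB_n)` of `H_z(SB_n)` spanned by the images of the singular
braids with `d` singular points. -/
def HzSd (n d : ℕ) : Submodule Lqz (HeckeZ n) :=
  Submodule.span Lqz
    {x | ∃ β : SB n, degM β = Multiplicative.ofAdd d ∧ x = ofHZ β}

/-- Strand counts: the positive natural numbers. -/
abbrev Idx : Type := {n : ℕ // 0 < n}

/-- The direct sum `⊕_{n ≥ 1} H_z(SB_n)`. -/
abbrev MV : Type := ⨁ i : Idx, HeckeZ i.1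

instance instAddCommGroupHeckeZ (n : ℕ) : AddCommGroup (HeckeZ n) := inferInstance
instance instModuleHeckeZ (n : ℕ) : Module Lqz (HeckeZ n) := inferInstance
instance instAddCommGroupMV : AddCommGroup MV := inferInstance
instance instModuleMV : Module Lqz MV := inferInstance

/-- The canonical inclusion of the `n`-th summand of `⊕_{n ≥ 1} H_z(SB_n)`. -/
def mvof (i : Idx) : HeckeZ i.1 →ₗ[Lqz] MV :=
  DirectSum.lof Lqz Idx (fun i => HeckeZ i.1) i

/-- Successor of a strand count. -/
def succI (i : Idx) : Idx := ⟨i.1 + 1, Nat.succ_pos _⟩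

/-- The generator `σ_n` of `SB_{n+1}`. -/
def sigmaLast (i : Idx) : SB (i.1 + 1) := sG ⟨i.1 - 1, Nat.sub_lt i.2 one_pos⟩

/-- The Markov relations in `⊕_{n ≥ 1} H_z(SB_n)`: trace relations, stabilization relations
and positive Markov relations. -/
def markovRels : Set MV :=
  {x | ∃ (i : Idx) (a b : HeckeZ i.1), x = mvof i (a * b) - mvof i (b * a)} ∪
  {x | ∃ (i : Idx) (a : HeckeZ i.1), x = mvof i a - mvof (succI i) (iotaHZ i.1 a)} ∪
  {x | ∃ (i : Idx) (a : HeckeZ i.1),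
    x = mvof (succI i) (iotaHZ i.1 a * ofHZ (sigmaLast i)) - zL • mvof i a}

/-- The Markov module `Markov(⊔SB)`. -/
abbrev Markov : Type := MV ⧸ Submodule.span Lqz markovRels

instance instAddCommGroupMarkov : AddCommGroup Markov := inferInstance
instance instModuleMarkov : Module Lqz Markov := inferInstance

/-- The class `[a, m]` in the Markov module of an element `a ∈ H_z(SB_m)`. -/
def markovClass (m : ℕ) (hm : 0 < m) (a : HeckeZ m) : Markov :=
  Submodule.Quotient.mk (mvof ⟨m, hm⟩ a)

/-- The class `[β, m]` in the Markov module of a singular braid `β ∈ SB_m`. -/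
def braidClass (m : ℕ) (hm : 0 < m) (β : SB m) : Markov :=
  markovClass m hm (ofHZ β)

/-- The direct sum `⊕_{n ≥ 1} H_z(S_dB_n)`. -/
abbrev MVD (d : ℕ) : Type := ⨁ i : Idx, ↥(HzSd i.1 d)

instance instAddCommGroupMVD (d : ℕ) : AddCommGroup (MVD d) := inferInstance
instance instModuleMVD (d : ℕ) : Module Lqz (MVD d) := inferInstance

/-- The canonical inclusion of the `n`-th summand of `⊕_{n ≥ 1} H_z(S_dB_n)`. -/
def mvdof (d : ℕ) (i : Idx) : ↥(HzSd i.1 d) →ₗ[Lqz] MVD d :=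
  DirectSum.lof Lqz Idx (fun i => ↥(HzSd i.1 d)) i

/-- The Markov relations in `⊕_{n ≥ 1} H_z(S_dB_n)`. -/
def markovRelsD (d : ℕ) : Set (MVD d) :=
  {x | ∃ (i : Idx) (k l : ℕ), k + l = d ∧ ∃ (a b : HeckeZ i.1),
    a ∈ HzSd i.1 k ∧ b ∈ HzSd i.1 l ∧
    ∃ (hab : a * b ∈ HzSd i.1 d) (hba : b * a ∈ HzSd i.1 d),
      x = mvdof d i ⟨a * b, hab⟩ - mvdof d i ⟨b * a, hba⟩} ∪
  {x | ∃ (i : Idx) (a : HeckeZ i.1) (ha : a ∈ HzSd i.1 d)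
      (ha' : iotaHZ i.1 a ∈ HzSd (i.1 + 1) d),
    x = mvdof d i ⟨a, ha⟩ - mvdof d (succI i) ⟨iotaHZ i.1 a, ha'⟩} ∪
  {x | ∃ (i : Idx) (a : HeckeZ i.1) (ha : a ∈ HzSd i.1 d)
      (ha' : iotaHZ i.1 a * ofHZ (sigmaLast i) ∈ HzSd (i.1 + 1) d),
    x = mvdof d (succI i) ⟨iotaHZ i.1 a * ofHZ (sigmaLast i), ha'⟩ - zL • mvdof d i ⟨a, ha⟩}

/-- The `d`-th Markov module `Markov(⊔S_dB)`. -/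
abbrev MarkovD (d : ℕ) : Type := MVD d ⧸ Submodule.span Lqz (markovRelsD d)

instance instAddCommGroupMarkovD (d : ℕ) : AddCommGroup (MarkovD d) := inferInstance
instance instModuleMarkovD (d : ℕ) : Module Lqz (MarkovD d) := inferInstance

/-- The class `[β, m]` in the `d`-th Markov module of a singular braid `β ∈ S_dB_m`
(defined to be `0` if `β` does not have exactly `d` singular points). -/
def classD (d m : ℕ) (hm : 0 < m) (β : SB m) : MarkovD d :=
  if h : degM β = Multiplicative.ofAdd d then
    Submodule.Quotient.mk (mvdof d ⟨m, hm⟩ ⟨ofHZ β, Submodule.subset_span ⟨β, h, rfl⟩⟩)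
  else 0
/-- The singular braid `W_{d,k} = τ_1 τ_3 ⋯ τ_{2k-1} (τ_{2k+1}σ_{2k+1}) ⋯ (τ_{2d-1}σ_{2d-1})`
in `SB_{2d}` (for `1 ≤ d` and `k ≤ d`). -/
def W (d k : ℕ) : SB (2 * d) :=
  ((List.range d).map (fun j =>
    if h : 2 * j < 2 * d - 1 then
      (if j < k then tauG ⟨2 * j, h⟩ else tauG ⟨2 * j, h⟩ * sG ⟨2 * j, h⟩)
    else 1)).prod

/-- The class of `W_{d,k}` in the `d`-th Markov module: `[W_{d,k}, 2d]` for `d ≥ 1`, and the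
class `[W_{0,0}, 1]` of the trivial braid on one strand for `d = 0`. -/
def WclassD (d k : ℕ) : MarkovD d :=
  if hd : d = 0 then hd ▸ classD 0 1 one_pos 1
  else classD d (2 * d) (by omega) (W d k)

/-- The singular braid `α_0 τ_{i_1} α_1 τ_{i_2} ⋯ τ_{i_d} α_d`. -/
def sbWord {m d : ℕ} (α : Fin (d + 1) → SB m) (idx : Fin d → Fin (m - 1)) : SB m :=
  α 0 * ((List.ofFn fun j : Fin d => tauG (idx j) * α j.succ).prod)

/-- The singular braid `α_0 τ_{i_1} α_1 ⋯ τ_{i_{k-1}} α_{k-1} x α_k τ_{i_{k+1}} ⋯ τ_{i_d} α_d`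
obtained from `α_0 τ_{i_1} α_1 ⋯ τ_{i_d} α_d` by replacing the letter `τ_{i_k}` by `x`. -/
def sbWordRepl {m d : ℕ} (α : Fin (d + 1) → SB m) (idx : Fin d → Fin (m - 1))
    (k : Fin d) (x : SB m) : SB m :=
  α 0 * ((List.ofFn fun j : Fin d => (if j = k then x else tauG (idx j)) * α j.succ).prod)

/-- `RepGen false i = 1` (deleting a `τ` letter) and `RepGen true i = σ_{i+1}` (replacing a
`τ` letter by the corresponding `σ` letter). -/
def RepGen {m : ℕ} (ε : Bool) (i : Fin (m - 1)) : SB m := if ε then sG i else 1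

/-- `IsG d ε g` says that the linear map `g : Markov(⊔S_dB) → Markov(⊔S_{d-1}B)` is induced
by the family of maps `f_{n,ε}` (deletion of one `τ` letter for `ε = false`, replacement of one
`τ` letter by the corresponding `σ` letter for `ε = true`), i.e. that
`g([β,n]) = [f_{n,ε}(β), n]` for every singular braid `β ∈ S_dB_n`. -/
def IsG (d : ℕ) (ε : Bool) (g : MarkovD d →ₗ[Lqz] MarkovD (d - 1)) : Prop :=
  ∀ (m : ℕ) (hm : 0 < m) (α : Fin (d + 1) → SB m) (idx : Fin d → Fin (m - 1)),
    (∀ j, degM (α j) = Multiplicative.ofAdd 0) →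
    g (classD d m hm (sbWord α idx)) =
      ∑ k : Fin d, classD (d - 1) m hm (sbWordRepl α idx k (RepGen ε (idx k)))

/-- The `ℂ(q,z)`-vector space freely spanned by the set `S_dB_m` of singular braids on `m`
strands with `d` singular points. -/
abbrev FreeSd (m d : ℕ) : Type :=
  {β : SB m // degM β = Multiplicative.ofAdd d} →₀ Lqz

/-- The basis element of `ℂ(q,z)[S_dB_m]` corresponding to a braid `β ∈ S_dB_m` (defined to
be `0` if `β` does not have exactly `d` singular points). -/
def freeElem {m : ℕ} (d : ℕ) (β : SB m) : FreeSd m d :=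
  if h : degM β = Multiplicative.ofAdd d then Finsupp.single ⟨β, h⟩ 1 else 0

/-- Iterated product (power) with respect to a given bilinear multiplication. -/
def powAux (mul : Markov →ₗ[Lqz] Markov →ₗ[Lqz] Markov) (one x : Markov) : ℕ → Markov
  | 0 => one
  | k + 1 => mul x (powAux mul one x k)

/-! ### Auxiliary development for the proof -/

section AuxBraid
variable {n : ℕ}

/-- ℕ-indexed generators (junk value `1` out of range). -/
def sN (n : ℕ) (i : ℕ) : SB n := if h : i < n - 1 then sG ⟨i, h⟩ else 1
def siN (n : ℕ) (i : ℕ) : SB n := if h : i < n - 1 then sInvG ⟨i, h⟩ else 1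
def tN (n : ℕ) (i : ℕ) : SB n := if h : i < n - 1 then tauG ⟨i, h⟩ else 1

theorem sN_mul_siN {i : ℕ} (h : i < n - 1) : sN n i * siN n i = 1 := by
  simp only [sN, siN, dif_pos h]
  simpa [sG, sInvG, map_mul] using SB.sound (SBRel.inv_right ⟨i, h⟩)

theorem siN_mul_sN {i : ℕ} (h : i < n - 1) : siN n i * sN n i = 1 := by
  simp only [sN, siN, dif_pos h]
  simpa [sG, sInvG, map_mul] using SB.sound (SBRel.inv_left ⟨i, h⟩)

theorem sN_comm_sN {i j : ℕ} (h : i + 2 ≤ j ∨ j + 2 ≤ i) :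
    sN n i * sN n j = sN n j * sN n i := by
  simp only [sN]
  split_ifs with h1 h2 h2
  · simpa [sG, map_mul] using SB.sound (SBRel.comm_ss ⟨i, h1⟩ ⟨j, h2⟩ (by simpa using h))
  all_goals simp

theorem sN_comm_tN {i j : ℕ} (h : i + 2 ≤ j ∨ j + 2 ≤ i) :
    sN n i * tN n j = tN n j * sN n i := by
  simp only [sN, tN]
  split_ifs with h1 h2 h2
  · simpa [sG, tauG, map_mul] using SB.sound (SBRel.comm_st ⟨i, h1⟩ ⟨j, h2⟩ (by simpa using h))
  all_goals simp

theorem tN_comm_sN {i j : ℕ} (h : i + 2 ≤ j ∨ j + 2 ≤ i) :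
    tN n i * sN n j = sN n j * tN n i := (sN_comm_tN h.symm).symm

theorem tN_comm_tN {i j : ℕ} (h : i + 2 ≤ j ∨ j + 2 ≤ i) :
    tN n i * tN n j = tN n j * tN n i := by
  simp only [tN]
  split_ifs with h1 h2 h2
  · simpa [tauG, map_mul] using SB.sound (SBRel.comm_tt ⟨i, h1⟩ ⟨j, h2⟩ (by simpa using h))
  all_goals simp

theorem braidN {i : ℕ} (h : i + 1 < n - 1) :
    sN n i * sN n (i + 1) * sN n i = sN n (i + 1) * sN n i * sN n (i + 1) := by
  have hi : i < n - 1 := by omega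
  simp only [sN, dif_pos h, dif_pos hi]
  simpa [sG, map_mul] using SB.sound (SBRel.braid ⟨i, hi⟩ ⟨i + 1, h⟩ (Or.inl rfl))

theorem braid_tauN {i : ℕ} (h : i + 1 < n - 1) :
    sN n (i + 1) * sN n i * tN n (i + 1) = tN n i * sN n (i + 1) * sN n i := by
  have hi : i < n - 1 := by omega
  simp only [sN, tN, dif_pos h, dif_pos hi]
  simpa [sG, tauG, map_mul] using SB.sound (SBRel.braid_tau ⟨i + 1, h⟩ ⟨i, hi⟩ (Or.inr rfl))

private theorem ctx2 {a b a' b' x : SB n} (h : a * b = a' * b') :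
    a * (b * x) = a' * (b' * x) := by
  rw [← mul_assoc, h, mul_assoc]

private theorem ctx3 {a b c a' b' c' x : SB n} (h : a * b * c = a' * b' * c') :
    a * (b * (c * x)) = a' * (b' * (c' * x)) := by
  rw [← mul_assoc, ← mul_assoc, h, mul_assoc, mul_assoc]

private theorem cancel_head {a b : SB n} (h : a * b = 1) (x : SB n) : a * (b * x) = x := by
  rw [← mul_assoc, h, one_mul]

/-- The conjugator swapping the strand pairs `{p+1,p+2}` and `{p+3,p+4}`. -/
def Vb (n p : ℕ) : SB n := sN n (p + 1) * sN n p * sN n (p + 2) * sN n (p + 1)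
def VbInv (n p : ℕ) : SB n := siN n (p + 1) * siN n (p + 2) * siN n p * siN n (p + 1)

theorem Vb_mul_VbInv {p : ℕ} (h : p + 2 < n - 1) : Vb n p * VbInv n p = 1 := by
  have h0 : p < n - 1 := by omega
  have h1 : p + 1 < n - 1 := by omega
  simp only [Vb, VbInv, mul_assoc]
  rw [cancel_head (sN_mul_siN h1), cancel_head (sN_mul_siN h),
    cancel_head (sN_mul_siN h0), sN_mul_siN h1]

theorem VbInv_mul_Vb {p : ℕ} (h : p + 2 < n - 1) : VbInv n p * Vb n p = 1 := by
  have h0 : p < n - 1 := by omega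
  have h1 : p + 1 < n - 1 := by omega
  simp only [Vb, VbInv, mul_assoc]
  rw [cancel_head (siN_mul_sN h1), cancel_head (siN_mul_sN h0),
    cancel_head (siN_mul_sN h), siN_mul_sN h1]

theorem Vb_sigma_up {p : ℕ} (h : p + 2 < n - 1) (x : SB n) :
    Vb n p * (sN n (p + 2) * x) = sN n p * (Vb n p * x) := by
  have h0 : p + 1 < n - 1 := by omega
  simp only [Vb, mul_assoc]
  rw [← ctx3 (braidN h), ← ctx3 (braidN h0)]

theorem Vb_tau_down {p : ℕ} (h : p + 2 < n - 1) (x : SB n) :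
    Vb n p * (tN n (p + 2) * x) = tN n p * (Vb n p * x) := by
  have h0 : p + 1 < n - 1 := by omega
  simp only [Vb, mul_assoc]
  rw [ctx3 (braid_tauN h), ctx3 (braid_tauN h0)]

theorem Vb_sigma_down {p : ℕ} (h : p + 2 < n - 1) (x : SB n) :
    Vb n p * (sN n p * x) = sN n (p + 2) * (Vb n p * x) := by
  have h0 : p + 1 < n - 1 := by omega
  simp only [Vb, mul_assoc]
  rw [ctx2 (sN_comm_sN (i := p) (j := p + 2) (Or.inl (by omega))),
    ctx3 (braidN (i := p) h0), ctx3 (braidN (i := p + 1) h),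
    ← ctx2 (sN_comm_sN (i := p) (j := p + 2) (Or.inl (by omega)))]

end AuxBraid


section AuxBlocks
variable {n : ℕ}

/-- Block at position `i` of the braid `W`: `τ_{2i}` if `i < k`, else `τ_{2i}σ_{2i}`. -/
def Bl (n k i : ℕ) : SB n := if i < k then tN n (2 * i) else tN n (2 * i) * sN n (2 * i)
/-- Product of the first `p` blocks. -/
def Lb (n k p : ℕ) : SB n := ((List.range p).map (Bl n k)).prod
/-- Product of `m` blocks starting at position `q`. -/
def Sh (n k q m : ℕ) : SB n := ((List.range m).map (fun t => Bl n k (q + t))).prod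

theorem Vb_commute_sN {p q : ℕ} (h : q + 2 ≤ p ∨ p + 4 ≤ q) : Commute (Vb n p) (sN n q) := by
  have c0 : Commute (sN n p) (sN n q) := sN_comm_sN (by omega)
  have c1 : Commute (sN n (p + 1)) (sN n q) := sN_comm_sN (by omega)
  have c2 : Commute (sN n (p + 2)) (sN n q) := sN_comm_sN (by omega)
  exact ((c1.mul_left c0).mul_left c2).mul_left c1

theorem Vb_commute_tN {p q : ℕ} (h : q + 2 ≤ p ∨ p + 4 ≤ q) : Commute (Vb n p) (tN n q) := by
  have c0 : Commute (sN n p) (tN n q) := sN_comm_tN (by omega)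
  have c1 : Commute (sN n (p + 1)) (tN n q) := sN_comm_tN (by omega)
  have c2 : Commute (sN n (p + 2)) (tN n q) := sN_comm_tN (by omega)
  exact ((c1.mul_left c0).mul_left c2).mul_left c1

theorem Vb_commute_Bl {p k i : ℕ} (h : 2 * i + 2 ≤ p ∨ p + 4 ≤ 2 * i) :
    Commute (Vb n p) (Bl n k i) := by
  unfold Bl; split_ifs
  · exact Vb_commute_tN (by omega)
  · exact (Vb_commute_tN (by omega)).mul_right (Vb_commute_sN (by omega))

theorem Vb_commute_Lb {p k : ℕ} : Commute (Vb n (2 * p)) (Lb n k p) := by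
  unfold Lb
  refine Commute.list_prod_right _ _ ?_
  intro y hy
  simp only [List.mem_map, List.mem_range] at hy
  obtain ⟨i, hi, rfl⟩ := hy
  exact Vb_commute_Bl (Or.inl (by omega))

theorem Vb_commute_Sh {p k m : ℕ} : Commute (Vb n (2 * p)) (Sh n k (p + 2) m) := by
  unfold Sh
  refine Commute.list_prod_right _ _ ?_
  intro y hy
  simp only [List.mem_map, List.mem_range] at hy
  obtain ⟨t, ht, rfl⟩ := hy
  exact Vb_commute_Bl (Or.inr (by omega))

theorem sN_commute_Bl {q k i : ℕ} (h : 2 * i + 2 ≤ q ∨ q + 2 ≤ 2 * i) :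
    Commute (sN n q) (Bl n k i) := by
  unfold Bl; split_ifs
  · exact sN_comm_tN h.symm
  · exact Commute.mul_right (sN_comm_tN h.symm) (sN_comm_sN h.symm)

theorem Vb_Bl_down {p k₁ k₂ : ℕ} (h : 2 * p + 2 < n - 1) (hiff : p + 1 < k₂ ↔ p < k₁)
    (x : SB n) :
    Vb n (2 * p) * (Bl n k₂ (p + 1) * x) = Bl n k₁ p * (Vb n (2 * p) * x) := by
  have h22 : 2 * (p + 1) = 2 * p + 2 := by ring
  by_cases hc : p + 1 < k₂
  · rw [Bl, if_pos hc, Bl, if_pos (hiff.1 hc), h22]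
    exact Vb_tau_down h x
  · rw [Bl, if_neg hc, Bl, if_neg (fun hh => hc (hiff.2 hh)), h22]
    calc Vb n (2*p) * ((tN n (2*p+2) * sN n (2*p+2)) * x)
        = Vb n (2*p) * (tN n (2*p+2) * (sN n (2*p+2) * x)) := by rw [mul_assoc]
      _ = tN n (2*p) * (Vb n (2*p) * (sN n (2*p+2) * x)) := Vb_tau_down h _
      _ = tN n (2*p) * (sN n (2*p) * (Vb n (2*p) * x)) := by rw [Vb_sigma_up h]
      _ = (tN n (2*p) * sN n (2*p)) * (Vb n (2*p) * x) := by rw [mul_assoc]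

theorem Lb_succ (n k p : ℕ) : Lb n k (p + 1) = Lb n k p * Bl n k p := by
  simp [Lb, List.range_succ]

theorem Sh_zero (n k q : ℕ) : Sh n k q 0 = 1 := rfl

theorem Sh_succ (n k q m : ℕ) : Sh n k q (m + 1) = Bl n k q * Sh n k (q + 1) m := by
  unfold Sh
  rw [List.range_succ_eq_map, List.map_cons, List.prod_cons, List.map_map]
  rw [Nat.add_zero]
  congr 2
  apply List.map_congr_left
  intro a _
  simp only [Function.comp_apply]
  congr 1
  omega

theorem degM_sN (i : ℕ) : degM (sN n i) = 1 := by
  unfold sN; split_ifs with h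
  · simp [sG, degM, degGen]
  · exact map_one degM

theorem degM_Vb (p : ℕ) : degM (Vb n p) = 1 := by
  simp [Vb, map_mul, degM_sN]

theorem degM_shiftHom {N k : ℕ} (h : k + n ≤ N) (γ : SB n) :
    degM (shiftHom N k h γ) = degM γ := by
  induction γ using Con.induction_on with
  | H w =>
    show degM (shiftHom N k h (SB.mk w)) = degM (SB.mk w)
    rw [shiftHom_mk]
    induction w using FreeMonoid.recOn with
    | one => simp
    | of_mul x xs ihx =>
      have hmap : FreeMonoid.map (shiftGen N k h) (FreeMonoid.of x * xs) =
          FreeMonoid.of (shiftGen N k h x) * FreeMonoid.map (shiftGen N k h) xs := by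
        rw [map_mul, FreeMonoid.map_of]
      rw [hmap]
      simp only [map_mul]
      rw [ihx]
      congr 1
      cases x <;> simp [degM, degGen, shiftGen, sG, tauG]

theorem inclSB_tauG {N : ℕ} (h : n ≤ N) (i : Fin (n - 1)) :
    inclSB N h (tauG i) = tauG ⟨0 + i.1, by have := i.2; omega⟩ := rfl

theorem incl_sN {N : ℕ} (hle : n ≤ N) (hN : n ≤ N) {q : ℕ} (hq : q < n - 1) :
    inclSB N hle (sN n q) = sN N q := by
  have hq2 : q < N - 1 := by omega
  rw [sN, dif_pos hq, sN, dif_pos hq2, inclSB_sG]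
  exact congrArg sG (Fin.ext (Nat.zero_add q))

theorem incl_tN {N : ℕ} (hle : n ≤ N) {q : ℕ} (hq : q < n - 1) :
    inclSB N hle (tN n q) = tN N q := by
  have hq2 : q < N - 1 := by omega
  rw [tN, dif_pos hq, tN, dif_pos hq2, inclSB_tauG]
  exact congrArg tauG (Fin.ext (Nat.zero_add q))

theorem incl_Bl {N : ℕ} (hle : n ≤ N) {k i : ℕ} (hi : 2 * i < n - 1) :
    inclSB N hle (Bl n k i) = Bl N k i := by
  unfold Bl; split_ifs
  · exact incl_tN hle hi
  · rw [map_mul, incl_tN hle hi, incl_sN hle hle hi]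

theorem incl_Lb {N : ℕ} (hle : n ≤ N) {k p : ℕ} (hp : 2 * p ≤ n) :
    inclSB N hle (Lb n k p) = Lb N k p := by
  unfold Lb
  rw [map_list_prod, List.map_map]
  congr 1
  apply List.map_congr_left
  intro i hi
  simp only [List.mem_range] at hi
  simp only [Function.comp_apply]
  exact incl_Bl hle (by omega)

end AuxBlocks


section AuxAlg
variable {n : ℕ}

theorem degM_sG (i : Fin (n - 1)) : degM (sG i) = 1 := by
  simp [sG, degM, degGen]

theorem heckeOf_mul (a b : SB n) : heckeOf (a * b) = heckeOf a * heckeOf b := by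
  unfold heckeOf
  rw [map_mul, map_mul]

theorem ofHZ_mul (a b : SB n) : ofHZ (a * b) = ofHZ a * ofHZ b := by
  simp [ofHZ, heckeOf_mul, Algebra.TensorProduct.tmul_mul_tmul]

theorem ofHZ_mem {d : ℕ} {β : SB n} (h : degM β = Multiplicative.ofAdd d) :
    ofHZ β ∈ HzSd n d :=
  Submodule.subset_span ⟨β, h, rfl⟩

theorem iotaHZ_ofHZ (γ : SB n) :
    iotaHZ n (ofHZ γ) = ofHZ (inclSB (n + 1) (Nat.le_succ n) γ) := by
  simp only [iotaHZ, ofHZ, Algebra.TensorProduct.map_tmul, AlgHom.coe_id, id_eq]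
  congr 1
  simp only [heckeIncl, heckeOf]
  rw [RingQuot.liftAlgHom_mkAlgHom_apply]
  simp only [AlgHom.coe_comp, Function.comp_apply, MonoidAlgebra.of_apply,
    MonoidAlgebra.mapDomainAlgHom_apply, MonoidAlgebra.mapDomain_single]

theorem degM_incl {N : ℕ} (h : n ≤ N) (γ : SB n) : degM (inclSB N h γ) = degM γ :=
  degM_shiftHom _ γ

theorem classD_conj {d' : ℕ} (hn : 0 < n) (c c' γ : SB n)
    (hcc : c * c' = 1) (hc'c : c' * c = 1) (hdc : degM c = 1) :
    classD d' n hn (c * γ * c') = classD d' n hn γ := by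
  have hdc' : degM c' = 1 := by
    have h := congrArg degM hcc
    rw [map_mul, hdc, one_mul, map_one] at h
    exact h
  have hdeg : degM (c * γ * c') = degM γ := by
    rw [map_mul, map_mul, hdc, hdc', one_mul, mul_one]
  by_cases hγ : degM γ = Multiplicative.ofAdd d'
  · have h1 : degM (c * γ * c') = Multiplicative.ofAdd d' := hdeg.trans hγ
    have hgc' : degM (γ * c') = Multiplicative.ofAdd d' := by
      rw [map_mul, hdc', mul_one]; exact hγ
    have e1 : ofHZ c * ofHZ (γ * c') = ofHZ (c * γ * c') := by
      rw [← ofHZ_mul, ← mul_assoc]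
    have e2 : ofHZ (γ * c') * ofHZ c = ofHZ γ := by
      rw [← ofHZ_mul, mul_assoc, hc'c, mul_one]
    simp only [classD, dif_pos h1, dif_pos hγ]
    rw [Submodule.Quotient.eq]
    refine Submodule.subset_span (Or.inl (Or.inl ⟨⟨n, hn⟩, 0, d', Nat.zero_add d',
      ofHZ c, ofHZ (γ * c'), ofHZ_mem (by rw [hdc]; exact ofAdd_zero.symm), ofHZ_mem hgc',
      e1.symm ▸ ofHZ_mem h1, e2.symm ▸ ofHZ_mem hγ, ?_⟩))
    congr 1
    · exact congrArg _ (Subtype.ext e1.symm)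
    · exact congrArg _ (Subtype.ext e2.symm)
  · have h1 : ¬ degM (c * γ * c') = Multiplicative.ofAdd d' := by rw [hdeg]; exact hγ
    simp only [classD, dif_neg h1, dif_neg hγ]

theorem classD_destab {d' : ℕ} (hn : 0 < n) (γ : SB n) :
    classD d' (n + 1) (Nat.succ_pos n) (inclSB (n + 1) (Nat.le_succ n) γ) =
      classD d' n hn γ := by
  have hdeg : degM (inclSB (n + 1) (Nat.le_succ n) γ) = degM γ := degM_shiftHom _ γ
  by_cases hγ : degM γ = Multiplicative.ofAdd d'
  · have h1 : degM (inclSB (n + 1) (Nat.le_succ n) γ) = Multiplicative.ofAdd d' :=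
      hdeg.trans hγ
    simp only [classD, dif_pos h1, dif_pos hγ]
    rw [Submodule.Quotient.eq]
    have hmem : mvdof d' ⟨n, hn⟩ ⟨ofHZ γ, ofHZ_mem hγ⟩ -
        mvdof d' (succI ⟨n, hn⟩) ⟨iotaHZ n (ofHZ γ), (iotaHZ_ofHZ γ).symm ▸ ofHZ_mem h1⟩ ∈
        Submodule.span Lqz (markovRelsD d') :=
      Submodule.subset_span (Or.inl (Or.inr ⟨⟨n, hn⟩, ofHZ γ, ofHZ_mem hγ, _, rfl⟩))
    have h2 := Submodule.neg_mem _ hmem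
    rw [neg_sub] at h2
    have he : (⟨iotaHZ n (ofHZ γ), (iotaHZ_ofHZ γ).symm ▸ ofHZ_mem h1⟩ :
        ↥(HzSd (n + 1) d')) = ⟨ofHZ (inclSB (n + 1) (Nat.le_succ n) γ), ofHZ_mem h1⟩ :=
      Subtype.ext (iotaHZ_ofHZ γ)
    exact (congrArg (fun x : ↥(HzSd (n + 1) d') => mvdof d' (succI ⟨n, hn⟩) x -
      mvdof d' ⟨n, hn⟩ ⟨ofHZ γ, ofHZ_mem hγ⟩ ∈ Submodule.span Lqz (markovRelsD d')) he).mp h2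
  · have h1 : ¬ degM (inclSB (n + 1) (Nat.le_succ n) γ) = Multiplicative.ofAdd d' := by
      rw [hdeg]; exact hγ
    simp only [classD, dif_neg h1, dif_neg hγ]

theorem classD_stab {d' : ℕ} (hn : 0 < n) (γ : SB n) :
    classD d' (n + 1) (Nat.succ_pos n)
        (inclSB (n + 1) (Nat.le_succ n) γ * sG ⟨n - 1, by omega⟩) =
      zL • classD d' n hn γ := by
  have hσ : degM (sG (⟨n - 1, by omega⟩ : Fin ((n + 1) - 1))) = 1 := degM_sG _
  have hdeg : degM (inclSB (n + 1) (Nat.le_succ n) γ * sG ⟨n - 1, by omega⟩) = degM γ := by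
    rw [map_mul, degM_incl, hσ, mul_one]
  by_cases hγ : degM γ = Multiplicative.ofAdd d'
  · have h1 := hdeg.trans hγ
    have e1 : iotaHZ n (ofHZ γ) * ofHZ (sigmaLast ⟨n, hn⟩) =
        ofHZ (inclSB (n + 1) (Nat.le_succ n) γ * sG ⟨n - 1, by omega⟩) := by
      rw [iotaHZ_ofHZ, ← ofHZ_mul]
      rfl
    simp only [classD, dif_pos h1, dif_pos hγ]
    rw [← Submodule.Quotient.mk_smul, Submodule.Quotient.eq]
    refine Submodule.subset_span (Or.inr ⟨⟨n, hn⟩, ofHZ γ, ofHZ_mem hγ,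
      e1.symm ▸ ofHZ_mem h1, ?_⟩)
    congr 1
    exact congrArg _ (Subtype.ext e1.symm)
  · have h1 : ¬ degM (inclSB (n + 1) (Nat.le_succ n) γ * sG ⟨n - 1, by omega⟩) =
        Multiplicative.ofAdd d' := by rw [hdeg]; exact hγ
    simp only [classD, dif_neg h1, dif_neg hγ, smul_zero]

end AuxAlg


section AuxChain
variable {n : ℕ}

theorem chainA (hn : 0 < n) (d' k₁ k₂ : ℕ) (hkk : ∀ p, (p + 1 < k₂ ↔ p < k₁)) :
    ∀ (m : ℕ), ∀ (p : ℕ), 2 * p + 2 * m + 1 ≤ n - 1 →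
      classD d' n hn (Lb n k₁ p * Sh n k₂ (p + 1) m) = classD d' n hn (Lb n k₁ (p + m)) := by
  intro m
  induction m with
  | zero => intro p _; rw [Sh_zero, mul_one, Nat.add_zero]
  | succ m ih =>
    intro p hr
    have hV : 2 * p + 2 < n - 1 := by omega
    have key : Vb n (2 * p) * (Lb n k₁ p * Sh n k₂ (p + 1) (m + 1)) * VbInv n (2 * p) =
        Lb n k₁ (p + 1) * Sh n k₂ (p + 2) m := by
      rw [Sh_succ]
      have c1 : Vb n (2 * p) * (Lb n k₁ p * (Bl n k₂ (p + 1) * Sh n k₂ (p + 2) m)) =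
          Lb n k₁ p * (Bl n k₁ p * (Sh n k₂ (p + 2) m * Vb n (2 * p))) := by
        rw [← mul_assoc, Vb_commute_Lb.eq, mul_assoc, Vb_Bl_down hV (hkk p),
          Vb_commute_Sh.eq]
      rw [c1]
      calc Lb n k₁ p * (Bl n k₁ p * (Sh n k₂ (p + 2) m * Vb n (2 * p))) * VbInv n (2 * p)
          = Lb n k₁ p * Bl n k₁ p * Sh n k₂ (p + 2) m *
              (Vb n (2 * p) * VbInv n (2 * p)) := by simp only [mul_assoc]
        _ = Lb n k₁ (p + 1) * Sh n k₂ (p + 2) m := by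
            rw [Vb_mul_VbInv hV, mul_one, Lb_succ]
    have step := classD_conj (d' := d') hn (Vb n (2 * p)) (VbInv n (2 * p))
      (Lb n k₁ p * Sh n k₂ (p + 1) (m + 1)) (Vb_mul_VbInv hV) (VbInv_mul_Vb hV) (degM_Vb _)
    rw [key] at step
    rw [← step, ih (p + 1) (by omega), show p + 1 + m = p + (m + 1) by omega]

theorem chainB (hn : 0 < n) (d' k : ℕ) :
    ∀ (m : ℕ), ∀ (p : ℕ), k ≤ p → 2 * p + 2 * m + 1 ≤ n - 1 →
      classD d' n hn (Lb n k p * (sN n (2 * p) * Sh n k (p + 1) m)) =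
        classD d' n hn (Lb n k (p + m) * sN n (2 * (p + m))) := by
  intro m
  induction m with
  | zero => intro p hk _; rw [Sh_zero, mul_one, Nat.add_zero]
  | succ m ih =>
    intro p hk hr
    have hV : 2 * p + 2 < n - 1 := by omega
    have key : Vb n (2 * p) * (Lb n k p * (sN n (2 * p) * Sh n k (p + 1) (m + 1))) *
        VbInv n (2 * p) = Lb n k (p + 1) * (sN n (2 * (p + 1)) * Sh n k (p + 2) m) := by
      rw [Sh_succ, show 2 * (p + 1) = 2 * p + 2 by ring]
      have c1 : Vb n (2 * p) * (Lb n k p * (sN n (2 * p) * (Bl n k (p + 1) * Sh n k (p + 2) m))) =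
          Lb n k p * (sN n (2 * p + 2) * (Bl n k p * (Sh n k (p + 2) m * Vb n (2 * p)))) := by
        rw [← mul_assoc, Vb_commute_Lb.eq, mul_assoc, Vb_sigma_down hV,
          Vb_Bl_down (k₁ := k) hV (iff_of_false (by omega) (by omega)), Vb_commute_Sh.eq]
      rw [c1]
      calc Lb n k p * (sN n (2 * p + 2) * (Bl n k p * (Sh n k (p + 2) m * Vb n (2 * p)))) *
              VbInv n (2 * p)
          = Lb n k p * (sN n (2 * p + 2) * Bl n k p) * Sh n k (p + 2) m *
              (Vb n (2 * p) * VbInv n (2 * p)) := by simp only [mul_assoc]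
        _ = Lb n k p * (Bl n k p * sN n (2 * p + 2)) * Sh n k (p + 2) m := by
            rw [Vb_mul_VbInv hV, mul_one, (sN_commute_Bl (i := p) (Or.inl (by omega))).eq]
        _ = Lb n k (p + 1) * (sN n (2 * p + 2) * Sh n k (p + 2) m) := by
            rw [Lb_succ]; simp only [mul_assoc]
    have step := classD_conj (d' := d') hn (Vb n (2 * p)) (VbInv n (2 * p))
      (Lb n k p * (sN n (2 * p) * Sh n k (p + 1) (m + 1)))
      (Vb_mul_VbInv hV) (VbInv_mul_Vb hV) (degM_Vb _)
    rw [key] at step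
    rw [← step, ih (p + 1) (by omega) (by omega), show p + 1 + m = p + (m + 1) by omega]

end AuxChain


section AuxWords

/-- The trivial-or-σ braidlets appearing between the `τ` letters of `W d k`. -/
def αd (d k : ℕ) : Fin (d + 1) → SB (2 * d) := fun j =>
  if j.1 ≤ k then 1 else sN (2 * d) (2 * (j.1 - 1))

def idxd (d : ℕ) (hd : 0 < d) : Fin d → Fin (2 * d - 1) := fun j =>
  ⟨2 * j.1, by have := j.2; omega⟩

theorem ofFn_eq_map_range {M : Type*} {d : ℕ} (f : Fin d → M) (g : ℕ → M)
    (h : ∀ j : Fin d, f j = g j.1) : List.ofFn f = (List.range d).map g := by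
  apply List.ext_getElem
  · simp
  · intro i h1 h2
    simp only [List.getElem_ofFn, List.getElem_map, List.getElem_range]
    exact h _

theorem W_eq (d k : ℕ) : W d k = ((List.range d).map (Bl (2 * d) k)).prod := by
  unfold W
  congr 1
  apply List.map_congr_left
  intro j hj
  simp only [List.mem_range] at hj
  have h2 : 2 * j < 2 * d - 1 := by omega
  rw [dif_pos h2]
  simp only [Bl, tN, sN, dif_pos h2]

theorem sbWord_eq (d k : ℕ) (hd : 0 < d) :
    sbWord (αd d k) (idxd d hd) = W d k := by
  rw [W_eq]
  unfold sbWord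
  rw [show αd d k 0 = 1 from if_pos (Nat.zero_le k), one_mul]
  refine congrArg List.prod (ofFn_eq_map_range _ (Bl (2 * d) k) ?_)
  intro j
  have hj2 : 2 * j.1 < 2 * d - 1 := by have := j.2; omega
  have ht : tauG (idxd d hd j) = tN (2 * d) (2 * j.1) := by
    simp only [idxd, tN, dif_pos hj2]
  rw [ht]
  simp only [αd, Bl, Fin.val_succ]
  by_cases hjk : j.1 < k
  · rw [if_pos (show j.1 + 1 ≤ k from hjk), if_pos hjk, mul_one]
  · rw [if_neg (show ¬ j.1 + 1 ≤ k from hjk), if_neg hjk]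
    rfl

theorem sbWordRepl_eq (d k : ℕ) (hd : 0 < d) (j : Fin d) :
    sbWordRepl (αd d k) (idxd d hd) j 1 =
      if j.1 < k then Lb (2 * d) (k - 1) j.1 * Sh (2 * d) k (j.1 + 1) (d - 1 - j.1)
      else Lb (2 * d) k j.1 *
        (sN (2 * d) (2 * j.1) * Sh (2 * d) k (j.1 + 1) (d - 1 - j.1)) := by
  unfold sbWordRepl
  rw [show αd d k 0 = 1 from if_pos (Nat.zero_le k), one_mul]
  have hofn : (List.ofFn fun jj : Fin d =>
        (if jj = j then (1 : SB (2 * d)) else tauG (idxd d hd jj)) * αd d k jj.succ) =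
      (List.range d).map (fun i => (if i = j.1 then (1 : SB (2 * d)) else tN (2 * d) (2 * i)) *
        (if i < k then 1 else sN (2 * d) (2 * i))) := by
    apply ofFn_eq_map_range
    intro jj
    have hj2 : 2 * jj.1 < 2 * d - 1 := by have := jj.2; omega
    have ht : tauG (idxd d hd jj) = tN (2 * d) (2 * jj.1) := by
      simp only [idxd, tN, dif_pos hj2]
    have hval : (jj = j) ↔ (jj.1 = j.1) := Fin.ext_iff
    simp only [αd, Fin.val_succ, ht]
    by_cases he : jj.1 = j.1 <;> by_cases hk2 : jj.1 < k
    · rw [if_pos (hval.2 he), if_pos he, if_pos (show jj.1 + 1 ≤ k from hk2), if_pos hk2]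
    · rw [if_pos (hval.2 he), if_pos he, if_neg (show ¬ jj.1 + 1 ≤ k from hk2), if_neg hk2,
        show jj.1 + 1 - 1 = jj.1 from rfl]
    · rw [if_neg (fun hh => he (hval.1 hh)), if_neg he,
        if_pos (show jj.1 + 1 ≤ k from hk2), if_pos hk2]
    · rw [if_neg (fun hh => he (hval.1 hh)), if_neg he,
        if_neg (show ¬ jj.1 + 1 ≤ k from hk2), if_neg hk2,
        show jj.1 + 1 - 1 = jj.1 from rfl]
  rw [hofn]
  have hsplit : List.range d =
      List.range j.1 ++ j.1 :: (List.range (d - 1 - j.1)).map (fun t => j.1 + 1 + t) := by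
    have hm : d = j.1 + 1 + (d - 1 - j.1) := by have := j.2; omega
    conv_lhs => rw [hm]
    rw [List.range_add, List.range_succ]
    simp [List.append_assoc]
  rw [hsplit, List.map_append, List.map_cons, List.prod_append, List.prod_cons, List.map_map]
  have hR : (List.range (d - 1 - j.1)).map
        ((fun i => (if i = j.1 then (1 : SB (2 * d)) else tN (2 * d) (2 * i)) *
          (if i < k then 1 else sN (2 * d) (2 * i))) ∘ (fun t => j.1 + 1 + t)) =
      (List.range (d - 1 - j.1)).map (fun t => Bl (2 * d) k (j.1 + 1 + t)) := by
    apply List.map_congr_left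
    intro t ht
    simp only [Function.comp_apply, Bl]
    rw [if_neg (by omega)]
    by_cases h3 : j.1 + 1 + t < k
    · rw [if_pos h3, if_pos h3, mul_one]
    · rw [if_neg h3, if_neg h3]
  rw [hR, if_pos (rfl : j.1 = j.1), one_mul]
  by_cases hjk : j.1 < k
  · rw [if_pos hjk, if_pos hjk]
    have hL : (List.range j.1).map
          (fun i => (if i = j.1 then (1 : SB (2 * d)) else tN (2 * d) (2 * i)) *
            (if i < k then 1 else sN (2 * d) (2 * i))) =
        (List.range j.1).map (Bl (2 * d) (k - 1)) := by
      apply List.map_congr_left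
      intro i hi
      simp only [List.mem_range] at hi
      rw [if_neg (by omega), if_pos (by omega), mul_one, Bl, if_pos (by omega)]
    rw [hL, one_mul]
    rfl
  · rw [if_neg hjk, if_neg hjk]
    have hL : (List.range j.1).map
          (fun i => (if i = j.1 then (1 : SB (2 * d)) else tN (2 * d) (2 * i)) *
            (if i < k then 1 else sN (2 * d) (2 * i))) =
        (List.range j.1).map (Bl (2 * d) k) := by
      apply List.map_congr_left
      intro i hi
      simp only [List.mem_range] at hi
      rw [if_neg (by omega), Bl]
      by_cases h3 : i < k
      · rw [if_pos h3, if_pos h3, mul_one]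
      · rw [if_neg h3, if_neg h3]
    rw [hL]
    rfl

end AuxWords


section AuxMain

theorem Trepl (e k : ℕ) (hk : k ≤ e + 1) (hd2 : 0 < e + 1) (hm : 0 < 2 * (e + 1))
    (j : Fin (e + 1)) :
    classD e (2 * (e + 1)) hm (sbWordRepl (αd (e + 1) k) (idxd (e + 1) hd2) j 1) =
      if j.1 < k then WclassD e (k - 1) else zL • WclassD e k := by
  rw [sbWordRepl_eq]
  by_cases hjk : j.1 < k
  · rw [if_pos hjk, if_pos hjk]
    have hch := chainA (n := 2 * (e + 1)) hm e (k - 1) k (fun p => by omega)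
      (e + 1 - 1 - j.1) j.1 (by have := j.2; omega)
    rw [hch, show j.1 + (e + 1 - 1 - j.1) = e from by have := j.2; omega]
    cases e with
    | zero =>
      have hk1 : k = 1 := by omega
      subst hk1
      have h := classD_destab (d' := 0) (hn := one_pos) (γ := (1 : SB 1))
      rw [map_one] at h
      have hW0 : WclassD 0 0 = classD 0 1 one_pos 1 := rfl
      exact h.trans hW0.symm
    | succ f =>
      have step1 : classD (f + 1) (2 * f + 3 + 1) (Nat.succ_pos _)
          (Lb (2 * f + 3 + 1) (k - 1) (f + 1)) =
          classD (f + 1) (2 * f + 3) (by omega) (Lb (2 * f + 3) (k - 1) (f + 1)) := by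
        rw [← incl_Lb (n := 2 * f + 3) (N := 2 * f + 3 + 1) (Nat.le_succ _)
          (k := k - 1) (p := f + 1) (by omega)]
        exact classD_destab (hn := by omega) _
      have step2 : classD (f + 1) (2 * f + 2 + 1) (Nat.succ_pos _)
          (Lb (2 * f + 2 + 1) (k - 1) (f + 1)) =
          classD (f + 1) (2 * f + 2) (by omega) (Lb (2 * f + 2) (k - 1) (f + 1)) := by
        rw [← incl_Lb (n := 2 * f + 2) (N := 2 * f + 2 + 1) (Nat.le_succ _)
          (k := k - 1) (p := f + 1) (by omega)]
        exact classD_destab (hn := by omega) _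
      have step3 : classD (f + 1) (2 * f + 2) (by omega) (Lb (2 * f + 2) (k - 1) (f + 1)) =
          WclassD (f + 1) (k - 1) := by
        simp only [WclassD]
        rw [dif_neg (Nat.succ_ne_zero f), W_eq]
        rfl
      exact step1.trans (step2.trans step3)
  · rw [if_neg hjk, if_neg hjk]
    have hch := chainB (n := 2 * (e + 1)) hm e k (e + 1 - 1 - j.1) j.1 (by omega)
      (by have := j.2; omega)
    rw [hch, show j.1 + (e + 1 - 1 - j.1) = e from by have := j.2; omega]
    cases e with
    | zero =>
      have hk0 : k = 0 := by omega
      subst hk0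
      have hstab := classD_stab (d' := 0) (hn := one_pos) (γ := (1 : SB 1))
      rw [map_one, one_mul] at hstab
      have hW0 : WclassD 0 0 = classD 0 1 one_pos 1 := rfl
      rw [hW0]
      refine Eq.trans ?_ hstab
      rw [show (Lb (2 * (0 + 1)) 0 0 : SB (2 * (0 + 1))) = 1 from rfl, one_mul,
        sN, dif_pos (by omega : (0 : ℕ) < 2 * (0 + 1) - 1)]
      rfl
    | succ f =>
      have e1 : (Lb (2 * f + 3 + 1) k (f + 1) : SB (2 * f + 3 + 1)) *
          sN (2 * f + 3 + 1) (2 * (f + 1)) =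
          inclSB (2 * f + 3 + 1) (Nat.le_succ _) (Lb (2 * f + 3) k (f + 1)) *
            sG ⟨2 * f + 3 - 1, by omega⟩ := by
        rw [incl_Lb (n := 2 * f + 3) (N := 2 * f + 3 + 1) (Nat.le_succ _)
          (k := k) (p := f + 1) (by omega)]
        congr 1
        rw [sN, dif_pos (by omega : 2 * (f + 1) < 2 * f + 3 + 1 - 1)]
        exact congrArg sG (Fin.ext (show 2 * (f + 1) = 2 * f + 3 - 1 by omega))
      have hstab := classD_stab (d' := f + 1) (hn := (by omega : 0 < 2 * f + 3))
        (γ := Lb (2 * f + 3) k (f + 1))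
      have step1 : classD (f + 1) (2 * f + 3 + 1) (Nat.succ_pos _)
          (Lb (2 * f + 3 + 1) k (f + 1) * sN (2 * f + 3 + 1) (2 * (f + 1))) =
          zL • classD (f + 1) (2 * f + 3) (by omega) (Lb (2 * f + 3) k (f + 1)) := by
        rw [e1]; exact hstab
      have step2 : classD (f + 1) (2 * f + 2 + 1) (Nat.succ_pos _)
          (Lb (2 * f + 2 + 1) k (f + 1)) =
          classD (f + 1) (2 * f + 2) (by omega) (Lb (2 * f + 2) k (f + 1)) := by
        rw [← incl_Lb (n := 2 * f + 2) (N := 2 * f + 2 + 1) (Nat.le_succ _)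
          (k := k) (p := f + 1) (by omega)]
        exact classD_destab (hn := by omega) _
      have step3 : classD (f + 1) (2 * f + 2) (by omega) (Lb (2 * f + 2) k (f + 1)) =
          WclassD (f + 1) k := by
        simp only [WclassD]
        rw [dif_neg (Nat.succ_ne_zero f), W_eq]
        rfl
      exact step1.trans (congrArg (fun x => zL • x) (step2.trans step3))

end AuxMain

/-- For every `d ≥ 1` and `0 ≤ k ≤ d`,
`g_0([W_{d,k}, 2d]) = k·[W_{d-1,k-1}, 2(d-1)] + z·(d-k)·[W_{d-1,k}, 2(d-1)]`
in `Markov(⊔S_{d-1}B)`. -/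
theorem g0_apply_wclass (d : ℕ) (hd : 1 ≤ d) (k : ℕ) (hk : k ≤ d)
    (g0 : MarkovD d →ₗ[Lqz] MarkovD (d - 1)) (h0 : IsG d false g0) :
    g0 (WclassD d k) =
      (k : Lqz) • WclassD (d - 1) (k - 1) +
      (((d - k : ℕ) : Lqz) * zL) • WclassD (d - 1) k := by
  obtain ⟨e, rfl⟩ : ∃ e, d = e + 1 := ⟨d - 1, by omega⟩
  have hd2 : 0 < e + 1 := Nat.succ_pos e
  have hm : 0 < 2 * (e + 1) := by omega
  have hα : ∀ jj : Fin (e + 1 + 1), degM (αd (e + 1) k jj) = Multiplicative.ofAdd 0 := by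
    intro jj
    unfold αd
    split_ifs
    · rw [map_one]; exact ofAdd_zero.symm
    · rw [degM_sN]; exact ofAdd_zero.symm
  have happ := h0 (2 * (e + 1)) hm (αd (e + 1) k) (idxd (e + 1) hd2) hα
  rw [sbWord_eq (e + 1) k hd2] at happ
  have hW : WclassD (e + 1) k = classD (e + 1) (2 * (e + 1)) hm (W (e + 1) k) := by
    simp only [WclassD]
    rw [dif_neg (Nat.succ_ne_zero e)]
  rw [hW]
  refine happ.trans ?_
  have hterm : ∀ j : Fin (e + 1),
      classD (e + 1 - 1) (2 * (e + 1)) hm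
          (sbWordRepl (αd (e + 1) k) (idxd (e + 1) hd2) j
            (RepGen false (idxd (e + 1) hd2 j))) =
        if j.1 < k then WclassD e (k - 1) else zL • WclassD e k := by
    intro j
    have hrep : RepGen false (idxd (e + 1) hd2 j) = (1 : SB (2 * (e + 1))) := rfl
    rw [hrep]
    exact Trepl e k hk hd2 hm j
  rw [Finset.sum_congr rfl (fun j _ => hterm j)]
  rw [Fin.sum_univ_eq_sum_range
    (fun i => if i < k then WclassD e (k - 1) else zL • WclassD e k)]
  rw [Finset.sum_ite, Finset.sum_const, Finset.sum_const]
  have h1 : (Finset.range (e + 1)).filter (fun i => i < k) = Finset.range k := by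
    ext i; simp only [Finset.mem_filter, Finset.mem_range]; omega
  have h2 : (Finset.range (e + 1)).filter (fun i => ¬ i < k) = Finset.Ico k (e + 1) := by
    ext i; simp only [Finset.mem_filter, Finset.mem_range, Finset.mem_Ico]; omega
  rw [h1, h2, Finset.card_range, Nat.card_Ico]
  rw [← Nat.cast_smul_eq_nsmul Lqz k (WclassD e (k - 1)),
    ← Nat.cast_smul_eq_nsmul Lqz (e + 1 - k) (zL • WclassD e k), smul_smul]
  rfl

end
end SingularHOMFLYPT
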